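/- Let G be a connected graph and let n ≥ 2. Then the diameter of G ⊕ N_n equals max{2, D(G)}, where N_n is the edgeless graph on n vertices. -/

import Mathlib

open SimpleGraph

/-- The Cartesian sum (disjunctive product) of two simple graphs. -/
def cartSum {α β : Type*} (G : SimpleGraph α) (H : SimpleGraph β) :
    SimpleGraph (α × β) where
  Adj x y := G.Adj x.1 y.1 ∨ H.Adj x.2 y.2
  symm := by
    constructor
    intro x y h
    exact h.imp (fun h' => h'.symm) (fun h' => h'.symm)
  loopless := by
    constructor
    intro x h
    exact h.elim (fun h' => h'.ne rfl) (fun h' => h'.ne rfl)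

/-- Two vertices are true twins if they are distinct and have equal closed
neighborhoods. -/
def TrueTwins {α : Type*} (G : SimpleGraph α) (u v : α) : Prop :=
  u ≠ v ∧ ∀ w, (G.Adj u w ∨ u = w) ↔ (G.Adj v w ∨ v = w)

/-- A twins-free clique: a clique containing no pair of true twins. -/
def IsTFClique {α : Type*} (G : SimpleGraph α) (s : Finset α) : Prop :=
  G.IsClique ↑s ∧ ∀ u ∈ s, ∀ v ∈ s, ¬ TrueTwins G u v

/-- The twins-free clique number. -/
noncomputable def tfCliqueNum {α : Type*} (G : SimpleGraph α) [Fintype α] : ℕ :=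
  sSup {n | ∃ s : Finset α, IsTFClique G s ∧ s.card = n}

/-- A strong resolving set: every pair of distinct vertices is strongly
resolved by some vertex of `S`. -/
def IsStrongResolvingSet {α : Type*} (G : SimpleGraph α) (S : Set α) : Prop :=
  ∀ u v : α, u ≠ v → ∃ w ∈ S,
    G.dist w u = G.dist w v + G.dist v u ∨ G.dist w v = G.dist w u + G.dist u v

/-- The strong metric dimension of a graph. -/
noncomputable def sdim {α : Type*} (G : SimpleGraph α) [Fintype α] : ℕ :=
  sInf {n | ∃ S : Finset α, IsStrongResolvingSet G ↑S ∧ S.card = n}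

/-- A vertex is isolated if it has no neighbors. -/
def IsIsolated {α : Type*} (G : SimpleGraph α) (u : α) : Prop :=
  ∀ w, ¬ G.Adj u w

/-- for connected `G` and `n ≥ 2`,
`D(G ⊕ N_n) = max {2, D(G)}`. -/
private lemma cartSum_lift_walk {α : Type*} {n : ℕ} {G : SimpleGraph α} :
    ∀ {a c : α} (p : G.Walk a c) (b d : Fin n), ¬p.Nil →
      ∃ q : (cartSum G (⊥ : SimpleGraph (Fin n))).Walk (a, b) (c, d),
        q.length = p.length := by
  intro a c p
  induction p with
  | nil => intro b d h; exact absurd SimpleGraph.Walk.nil_nil h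
  | @cons a a' c h p ih =>
    intro b d _
    cases p with
    | nil =>
      exact ⟨SimpleGraph.Walk.cons (Or.inl h) SimpleGraph.Walk.nil, rfl⟩
    | cons h2 p2 =>
      obtain ⟨q, hq⟩ := ih b d SimpleGraph.Walk.not_nil_cons
      exact ⟨SimpleGraph.Walk.cons (Or.inl h) q, congrArg (· + 1) hq⟩

/-- for connected `G` and `n ≥ 2`,
`D(G ⊕ N_n) = max {2, D(G)}`. -/
theorem diam_cartSum_bot {α : Type*} [Fintype α] [Nontrivial α]
    (G : SimpleGraph α) (hG : G.Connected) (n : ℕ) (hn : 2 ≤ n) :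
    (cartSum G (⊥ : SimpleGraph (Fin n))).diam = max 2 G.diam := by
  classical
  set H := cartSum G (⊥ : SimpleGraph (Fin n)) with hH
  haveI : Nonempty (Fin n) := ⟨⟨0, by omega⟩⟩
  -- projection hom
  have fadj : ∀ {x y : α × Fin n}, H.Adj x y → G.Adj x.1 y.1 := by
    intro x y h
    exact h.elim id (fun h' => absurd h' (by simp))
  let f : H →g G := ⟨Prod.fst, fadj⟩
  -- every vertex of G has a neighbor
  have hnbr : ∀ a : α, ∃ a', G.Adj a a' := by
    intro a
    obtain ⟨b, hb⟩ := exists_ne a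
    obtain ⟨p⟩ := hG.preconnected a b
    cases p with
    | nil => exact absurd rfl hb
    | cons h _ => exact ⟨_, h⟩
  -- preconnected
  have hpre : H.Preconnected := by
    rintro ⟨a, b⟩ ⟨c, d⟩
    by_cases hac : a = c
    · subst hac
      by_cases hbd : b = d
      · subst hbd; exact SimpleGraph.Reachable.refl _
      · obtain ⟨a', ha'⟩ := hnbr a
        exact ⟨SimpleGraph.Walk.cons (show H.Adj (a, b) (a', b) from Or.inl ha')
          (SimpleGraph.Walk.cons (show H.Adj (a', b) (a, d) from Or.inl ha'.symm)
            SimpleGraph.Walk.nil)⟩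
    · obtain ⟨p⟩ := hG.preconnected a c
      cases p with
      | nil => exact absurd rfl hac
      | cons h p' =>
        obtain ⟨q, _⟩ := cartSum_lift_walk (SimpleGraph.Walk.cons h p') b d
          SimpleGraph.Walk.not_nil_cons
        exact ⟨q⟩
  have hHtop : H.ediam ≠ ⊤ := by
    obtain ⟨u, v, huv⟩ := H.exists_edist_eq_ediam_of_finite
    rw [← huv]
    exact SimpleGraph.edist_ne_top_iff_reachable.mpr (hpre u v)
  have hGtop : G.ediam ≠ ⊤ := by
    obtain ⟨u, v, huv⟩ := G.exists_edist_eq_ediam_of_finite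
    rw [← huv]
    exact SimpleGraph.edist_ne_top_iff_reachable.mpr (hG.preconnected u v)
  -- distances with differing first coordinate
  have hdiff : ∀ (a c : α) (b d : Fin n), a ≠ c →
      H.dist (a, b) (c, d) = G.dist a c := by
    intro a c b d hac
    apply le_antisymm
    · obtain ⟨p, hp⟩ := hG.exists_walk_length_eq_dist a c
      have hnnil : ¬p.Nil := by
        rw [SimpleGraph.Walk.nil_iff_length_eq, hp]
        rw [Ne, ← hG.dist_eq_zero_iff] at hac
        exact hac
      obtain ⟨q, hq⟩ := cartSum_lift_walk p b d hnnil
      calc H.dist (a, b) (c, d) ≤ q.length := SimpleGraph.dist_le q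
        _ = G.dist a c := by rw [hq, hp]
    · obtain ⟨q, hq⟩ := (hpre (a, b) (c, d)).exists_walk_length_eq_dist
      calc G.dist a c ≤ (q.map f).length := SimpleGraph.dist_le _
        _ = H.dist (a, b) (c, d) := by rw [SimpleGraph.Walk.length_map, hq]
  -- distances with equal first coordinate
  have hsame : ∀ (a : α) (b d : Fin n), b ≠ d → H.dist (a, b) (a, d) = 2 := by
    intro a b d hbd
    obtain ⟨a', ha'⟩ := hnbr a
    have hle : H.dist (a, b) (a, d) ≤ 2 := by
      have hw := SimpleGraph.dist_le
        (SimpleGraph.Walk.cons (show H.Adj (a, b) (a', b) from Or.inl ha')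
          (SimpleGraph.Walk.cons (show H.Adj (a', b) (a, d) from Or.inl ha'.symm)
            SimpleGraph.Walk.nil))
      simpa using hw
    have hne0 : H.dist (a, b) (a, d) ≠ 0 := fun h =>
      hbd (congrArg Prod.snd ((hpre _ _).dist_eq_zero_iff.mp h))
    have hne1 : H.dist (a, b) (a, d) ≠ 1 := fun h =>
      (fadj (SimpleGraph.dist_eq_one_iff_adj.mp h)).ne rfl
    omega
  apply le_antisymm
  · obtain ⟨⟨a, b⟩, ⟨c, d⟩, huv⟩ := H.exists_dist_eq_diam
    rw [← huv]
    by_cases hac : a = c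
    · subst hac
      by_cases hbd : b = d
      · subst hbd; simp [SimpleGraph.dist_self]
      · rw [hsame a b d hbd]; exact le_max_left _ _
    · rw [hdiff a c b d hac]
      exact le_trans (SimpleGraph.dist_le_diam hGtop) (le_max_right _ _)
  · apply max_le
    · obtain ⟨a⟩ := (inferInstance : Nonempty α)
      have h2 : H.dist (a, ⟨0, by omega⟩) (a, ⟨1, by omega⟩) = 2 :=
        hsame a _ _ (fun h => by simpa using congrArg Fin.val h)
      rw [← h2]
      exact SimpleGraph.dist_le_diam hHtop
    · obtain ⟨u, v, huv⟩ := G.exists_dist_eq_diam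
      by_cases huveq : u = v
      · subst huveq
        rw [← huv, SimpleGraph.dist_self]
        exact Nat.zero_le _
      · rw [← huv, ← hdiff u v ⟨0, by omega⟩ ⟨0, by omega⟩ huveq]
        exact SimpleGraph.dist_le_diam hHtop
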